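/- Let Γ be a convex lattice polygon such that Γ' and Γ'' (first and second adjoints, convex hulls of interior lattice points iterated) are both nonempty, and let h be a nonzero integral linear functional. If h is tight for Γ' (max_{Γ'} h = max_{Γ''} h + 1 and min_{Γ'} h = min_{Γ''} h − 1), then h is tight for Γ. -/

import Mathlib

noncomputable section

/-- `p` is a lattice point of `ℤ² ⊂ ℝ²`. -/
def IsLat (p : ℝ × ℝ) : Prop := (∃ m : ℤ, p.1 = m) ∧ (∃ n : ℤ, p.2 = n)

/-- evaluation of the integral linear functional `h` at a point `p`. -/
def ev (h : ℤ × ℤ) (p : ℝ × ℝ) : ℝ := (h.1 : ℝ) * p.1 + (h.2 : ℝ) * p.2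

/-- the maximum of `h` on `Γ`. -/
def maxW (Γ : Set (ℝ × ℝ)) (h : ℤ × ℤ) : ℝ := sSup (ev h '' Γ)

/-- the minimum of `h` on `Γ`. -/
def minW (Γ : Set (ℝ × ℝ)) (h : ℤ × ℤ) : ℝ := sInf (ev h '' Γ)

/-- the width of `Γ` in direction `h`. -/
def width (Γ : Set (ℝ × ℝ)) (h : ℤ × ℤ) : ℝ := maxW Γ h - minW Γ h

/-- the adjoint polygon: convex hull of the interior lattice points of `Γ`. -/
def adjoint (Γ : Set (ℝ × ℝ)) : Set (ℝ × ℝ) :=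
  convexHull ℝ {p | p ∈ interior Γ ∧ IsLat p}

/-- `h` is tight for `Γ` (max-tight and min-tight with respect to the adjoint). -/
def Tight (Γ : Set (ℝ × ℝ)) (h : ℤ × ℤ) : Prop :=
  maxW Γ h = maxW (adjoint Γ) h + 1 ∧ minW Γ h = minW (adjoint Γ) h - 1

/-- the lattice width of `Γ`: minimal width over nonzero integral directions. -/
def latticeWidth (Γ : Set (ℝ × ℝ)) : ℝ := sInf (width Γ '' {h : ℤ × ℤ | h ≠ 0})

/-- a primitive integral direction. -/
def IsPrimitive (h : ℤ × ℤ) : Prop := Int.gcd h.1 h.2 = 1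

/-- the set of optimal (minimal width) nonzero directions of `Γ`. -/
def optimalSet (Γ : Set (ℝ × ℝ)) : Set (ℤ × ℤ) :=
  {h | h ≠ 0 ∧ width Γ h = latticeWidth Γ}

lemma ev_lin (h : ℤ × ℤ) : IsLinearMap ℝ (ev h) := by
  constructor
  · intro x y; simp [ev, Prod.fst_add, Prod.snd_add]; ring
  · intro c x; simp [ev, Prod.smul_fst, Prod.smul_snd, smul_eq_mul]; ring

lemma ev_lat (h : ℤ × ℤ) (q : ℝ × ℝ) (hq : IsLat q) : ∃ z : ℤ, ev h q = (z : ℝ) := by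
  obtain ⟨⟨m, hm⟩, ⟨n, hn⟩⟩ := hq
  exact ⟨h.1 * m + h.2 * n, by rw [ev, hm, hn]; push_cast; ring⟩

lemma maxW_spec (T : Set (ℝ × ℝ)) (hT : T.Finite) (hTne : T.Nonempty) (h : ℤ × ℤ) :
    (∃ q ∈ T, ev h q = maxW (convexHull ℝ T) h) ∧
    ∀ z ∈ convexHull ℝ T, ev h z ≤ maxW (convexHull ℝ T) h := by
  have himf : (ev h '' T).Finite := hT.image _
  have himne : (ev h '' T).Nonempty := hTne.image _
  have hBmem : sSup (ev h '' T) ∈ ev h '' T := himne.csSup_mem himf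
  have hub : ∀ z ∈ convexHull ℝ T, ev h z ≤ sSup (ev h '' T) := by
    intro z hz
    have hsub : convexHull ℝ T ⊆ {w | ev h w ≤ sSup (ev h '' T)} :=
      convexHull_min (fun q hq => le_csSup himf.bddAbove ⟨q, hq, rfl⟩)
        (convex_halfSpace_le (ev_lin h) _)
    exact hsub hz
  have hm : maxW (convexHull ℝ T) h = sSup (ev h '' T) := by
    apply le_antisymm
    · exact csSup_le (himne.mono (Set.image_mono (subset_convexHull ℝ T)))
        (by rintro r ⟨z, hz, rfl⟩; exact hub z hz)
    · obtain ⟨q, hq, hqe⟩ := hBmem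
      exact hqe ▸ le_csSup ⟨sSup (ev h '' T), by rintro r ⟨z, hz, rfl⟩; exact hub z hz⟩
        ⟨q, subset_convexHull ℝ T hq, rfl⟩
  obtain ⟨q, hq, hqe⟩ := hBmem
  exact ⟨⟨q, hq, by rw [hm]; exact hqe⟩, fun z hz => by rw [hm]; exact hub z hz⟩

lemma minW_eq_neg (T : Set (ℝ × ℝ)) (hT : T.Finite) (hTne : T.Nonempty) (h : ℤ × ℤ) :
    minW (convexHull ℝ T) h = -maxW (convexHull ℝ T) (-h.1, -h.2) := by
  have hev : ∀ q, ev (-h.1, -h.2) q = -ev h q := by intro q; simp [ev]; ring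
  obtain ⟨⟨q, hq, hqe⟩, hub⟩ := maxW_spec T hT hTne (-h.1, -h.2)
  have himne : (ev h '' convexHull ℝ T).Nonempty :=
    (hTne.mono (subset_convexHull ℝ T)).image _
  have hlb : ∀ r ∈ ev h '' convexHull ℝ T, -maxW (convexHull ℝ T) (-h.1, -h.2) ≤ r := by
    rintro r ⟨z, hz, rfl⟩
    have := hub z hz
    rw [hev] at this; linarith
  apply le_antisymm
  · have hmem : ev h q ∈ ev h '' convexHull ℝ T := ⟨q, subset_convexHull ℝ T hq, rfl⟩
    have : minW (convexHull ℝ T) h ≤ ev h q := csInf_le ⟨_, hlb⟩ hmem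
    rw [hev] at hqe
    linarith
  · exact le_csInf himne hlb

lemma lat_finite (T : Set (ℝ × ℝ)) (hT : T.Finite) :
    {p | p ∈ interior (convexHull ℝ T) ∧ IsLat p}.Finite := by
  rcases T.eq_empty_or_nonempty with rfl | hTne
  · simp
  -- bound
  have hbddfst : BddAbove ((fun q : ℝ × ℝ => |q.1| ⊔ |q.2|) '' T) := (hT.image _).bddAbove
  obtain ⟨N, hN⟩ := hbddfst
  have hNb : ∀ q ∈ T, |q.1| ≤ N ∧ |q.2| ≤ N := by
    intro q hq
    have := hN ⟨q, hq, rfl⟩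
    exact ⟨le_trans (le_sup_left) this, le_trans (le_sup_right) this⟩
  set M : ℤ := ⌈N⌉ with hM
  have hbox : convexHull ℝ T ⊆ {q : ℝ × ℝ | -N ≤ q.1} ∩ {q | q.1 ≤ N} ∩ ({q | -N ≤ q.2} ∩ {q | q.2 ≤ N}) := by
    apply convexHull_min
    · intro q hq
      obtain ⟨h1, h2⟩ := hNb q hq
      rw [abs_le] at h1 h2
      exact ⟨⟨h1.1, h1.2⟩, ⟨h2.1, h2.2⟩⟩
    · have lfst : IsLinearMap ℝ (fun q : ℝ × ℝ => q.1) := ⟨fun x y => rfl, fun c x => rfl⟩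
      have lsnd : IsLinearMap ℝ (fun q : ℝ × ℝ => q.2) := ⟨fun x y => rfl, fun c x => rfl⟩
      exact (((convex_halfSpace_ge lfst (-N)).inter (convex_halfSpace_le lfst N)).inter
        ((convex_halfSpace_ge lsnd (-N)).inter (convex_halfSpace_le lsnd N)))
  have hfin : (Set.Icc ((-M, -M) : ℤ × ℤ) (M, M)).Finite := Set.finite_Icc _ _
  apply Set.Finite.subset (hfin.image (fun z : ℤ × ℤ => ((z.1 : ℝ), (z.2 : ℝ))))
  rintro p ⟨hpi, ⟨⟨m, hm⟩, ⟨n, hn⟩⟩⟩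
  have hpbox := hbox (interior_subset hpi)
  obtain ⟨⟨ha, hb⟩, ⟨hc, hd⟩⟩ := hpbox
  simp only [Set.mem_setOf_eq] at ha hb hc hd
  rw [hm] at ha hb; rw [hn] at hc hd
  have hNM : N ≤ (M : ℝ) := Int.le_ceil N
  refine ⟨(m, n), ?_, by rw [Prod.ext_iff]; exact ⟨hm.symm, hn.symm⟩⟩
  rw [Set.mem_Icc]
  have h1 : (-M : ℝ) ≤ (m : ℝ) := by linarith
  have h2 : (m : ℝ) ≤ (M : ℝ) := by linarith
  have h3 : (-M : ℝ) ≤ (n : ℝ) := by linarith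
  have h4 : (n : ℝ) ≤ (M : ℝ) := by linarith
  exact ⟨⟨by exact_mod_cast h1, by exact_mod_cast h3⟩, ⟨by exact_mod_cast h2, by exact_mod_cast h4⟩⟩

lemma interior_strict (w' : ℤ × ℤ) (hwne : ¬(w'.1 = 0 ∧ w'.2 = 0)) (T : Set (ℝ × ℝ))
    (p : ℝ × ℝ) (hp : p ∈ interior (convexHull ℝ T)) (C' : ℝ)
    (hhull : ∀ z ∈ convexHull ℝ T, C' ≤ ev w' z) : C' < ev w' p := by
  set dvec : ℝ × ℝ := ((w'.1 : ℝ), (w'.2 : ℝ)) with hdvecdef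
  have hevpos : 0 < ev w' dvec := by
    simp only [ev, hdvecdef]
    rcases not_and_or.mp hwne with h1 | h2
    · have h1R : ((w'.1 : ℝ)) ≠ 0 := Int.cast_ne_zero.mpr h1
      nlinarith [mul_self_pos.mpr h1R, mul_self_nonneg ((w'.2 : ℝ))]
    · have h2R : ((w'.2 : ℝ)) ≠ 0 := Int.cast_ne_zero.mpr h2
      nlinarith [mul_self_pos.mpr h2R, mul_self_nonneg ((w'.1 : ℝ))]
  have hdvne : dvec ≠ 0 := by
    intro h0; rw [h0] at hevpos; simp [ev] at hevpos
  have hdn : (0 : ℝ) < ‖dvec‖ := norm_pos_iff.mpr hdvne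
  obtain ⟨δ, hδpos, hball⟩ := Metric.mem_nhds_iff.mp (mem_interior_iff_mem_nhds.mp hp)
  set s' : ℝ := δ / (2 * ‖dvec‖) with hs'def
  have hs'pos : 0 < s' := by positivity
  have hq' : p + (-s') • dvec ∈ convexHull ℝ T := by
    apply hball
    rw [Metric.mem_ball, dist_eq_norm, add_sub_cancel_left, norm_smul,
      Real.norm_eq_abs, abs_neg, abs_of_pos hs'pos]
    have hsd : s' * ‖dvec‖ = δ / 2 := by
      rw [hs'def]; field_simp
    rw [hsd]; linarith
  have hevq : ev w' (p + (-s') • dvec) = ev w' p - s' * ev w' dvec := by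
    rw [(ev_lin w').map_add, (ev_lin w').map_smul, smul_eq_mul]; ring
  have := hhull _ hq'
  rw [hevq] at this
  nlinarith [mul_pos hs'pos hevpos]

set_option maxHeartbeats 2000000 in
lemma key (S : Set (ℝ × ℝ)) (hfin : S.Finite) (hne : S.Nonempty)
    (hlat : ∀ p ∈ S, IsLat p)
    (hint1 : {p | p ∈ interior (convexHull ℝ S) ∧ IsLat p}.Nonempty)
    (hint2 : {p | p ∈ interior (adjoint (convexHull ℝ S)) ∧ IsLat p}.Nonempty)
    (h : ℤ × ℤ)
    (hmax : maxW (adjoint (convexHull ℝ S)) h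
      = maxW (adjoint (adjoint (convexHull ℝ S))) h + 1) :
    maxW (convexHull ℝ S) h = maxW (adjoint (convexHull ℝ S)) h + 1 := by
  classical
  simp only [adjoint] at hmax hint2 ⊢
  have hP1fin : ({p | p ∈ interior (convexHull ℝ S) ∧ IsLat p}).Finite := lat_finite S hfin
  have hP2fin : ({p | p ∈ interior (convexHull ℝ
      {p | p ∈ interior (convexHull ℝ S) ∧ IsLat p}) ∧ IsLat p}).Finite := lat_finite _ hP1fin
  have hint2' : ({p | p ∈ interior (convexHull ℝ
      {p | p ∈ interior (convexHull ℝ S) ∧ IsLat p}) ∧ IsLat p}).Nonempty := hint2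
  obtain ⟨⟨v, hvS, hvev⟩, ubG⟩ := maxW_spec S hfin hne h
  obtain ⟨⟨u, huP, huev⟩, ubG1⟩ := maxW_spec _ hP1fin hint1 h
  obtain ⟨⟨p, hpP, hpev⟩, ubG2⟩ := maxW_spec _ hP2fin hint2' h
  obtain ⟨Mz, hMz⟩ := ev_lat h v (hlat v hvS)
  obtain ⟨t1, ht1⟩ := ev_lat h u huP.2
  obtain ⟨tz, htz⟩ := ev_lat h p hpP.2
  -- the adjoint identifications
  have hmaxΓ : maxW (convexHull ℝ S) h = (Mz : ℝ) := by rw [← hvev]; exact hMz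
  have hmaxΓ1 : maxW (convexHull ℝ {p | p ∈ interior (convexHull ℝ S) ∧ IsLat p}) h = (t1 : ℝ) := by rw [← huev]; exact ht1
  have hmaxΓ2 : maxW (convexHull ℝ {p | p ∈ interior (convexHull ℝ {p | p ∈ interior (convexHull ℝ S) ∧ IsLat p}) ∧ IsLat p}) h = (tz : ℝ) := by
    rw [← hpev]; exact htz
  have ht1tz : t1 = tz + 1 := by
    have : (t1 : ℝ) = (tz : ℝ) + 1 := by rw [← hmaxΓ1, ← hmaxΓ2]; exact hmax
    exact_mod_cast this
  -- primitivity
  have hgcd : Int.gcd h.1 h.2 = 1 := by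
    have hdvd : ∀ (q : ℝ × ℝ), IsLat q → ∀ z : ℤ, ev h q = (z : ℝ) →
        (Int.gcd h.1 h.2 : ℤ) ∣ z := by
      intro q hq z hz
      obtain ⟨⟨m, hm⟩, ⟨n, hn⟩⟩ := hq
      have : h.1 * m + h.2 * n = z := by
        have : ((h.1 * m + h.2 * n : ℤ) : ℝ) = (z : ℝ) := by
          rw [← hz, ev, hm, hn]; push_cast; ring
        exact_mod_cast this
      rw [← this]
      exact dvd_add (Dvd.dvd.mul_right (Int.gcd_dvd_left h.1 h.2) m)
        (Dvd.dvd.mul_right (Int.gcd_dvd_right h.1 h.2) n)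
    have d1 : (Int.gcd h.1 h.2 : ℤ) ∣ t1 := hdvd u huP.2 t1 ht1
    have d2 : (Int.gcd h.1 h.2 : ℤ) ∣ tz := hdvd p hpP.2 tz htz
    have : (Int.gcd h.1 h.2 : ℤ) ∣ 1 := by
      have := dvd_sub d1 d2
      rwa [ht1tz, add_sub_cancel_left] at this
    exact Nat.dvd_one.mp (by exact_mod_cast this)
  obtain ⟨α, β, hαβ⟩ := Int.isCoprime_iff_gcd_eq_one.mpr hgcd
  set g : ℤ × ℤ := (β, -α) with hgdef
  have hdet : g.1 * h.2 - g.2 * h.1 = 1 := by simp [hgdef]; linarith [hαβ]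
  have hdetR : (g.1 : ℝ) * (h.2 : ℝ) - (g.2 : ℝ) * (h.1 : ℝ) = 1 := by exact_mod_cast hdet
  have hcoord : ∀ q : ℝ × ℝ, q.1 = (h.2 : ℝ) * ev g q - (g.2 : ℝ) * ev h q ∧
      q.2 = (g.1 : ℝ) * ev h q - (h.1 : ℝ) * ev g q := by
    intro q
    unfold ev
    constructor
    · linear_combination -q.1 * hdetR
    · linear_combination -q.2 * hdetR
  have hlatco : ∀ (q : ℝ × ℝ) (a b : ℤ), ev g q = (a : ℝ) → ev h q = (b : ℝ) → IsLat q := by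
    intro q a b ha hb
    refine ⟨⟨h.2 * a - g.2 * b, ?_⟩, ⟨g.1 * b - h.1 * a, ?_⟩⟩
    · rw [(hcoord q).1, ha, hb]; push_cast; ring
    · rw [(hcoord q).2, ha, hb]; push_cast; ring
  -- convexity
  have cvxΓ : Convex ℝ (convexHull ℝ S) := convex_convexHull ℝ S
  have cvxInt : Convex ℝ (interior (convexHull ℝ S)) := cvxΓ.interior
  -- height bound on interior lattice points
  have hP1h : ∀ z : ℝ × ℝ, z ∈ interior (convexHull ℝ S) → IsLat z → ev h z ≤ (t1 : ℝ) := by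
    intro z hzi hzl
    have := ubG1 z (subset_convexHull ℝ _ ⟨hzi, hzl⟩)
    rwa [← huev, ht1] at this
  have hP2h : ∀ z : ℝ × ℝ,
      z ∈ interior (convexHull ℝ {p | p ∈ interior (convexHull ℝ S) ∧ IsLat p}) →
      IsLat z → ev h z ≤ (tz : ℝ) := by
    intro z hzi hzl
    have := ubG2 z (subset_convexHull ℝ _ ⟨hzi, hzl⟩)
    rwa [← hpev, htz] at this
  -- easy lower bound : t1 + 1 ≤ Mz
  have hMget1 : t1 + 1 ≤ Mz := by
    have hnhds : convexHull ℝ S ∈ nhds u := mem_interior_iff_mem_nhds.mp huP.1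
    obtain ⟨δ, hδpos, hball⟩ := Metric.mem_nhds_iff.mp hnhds
    set d : ℝ × ℝ := (-(g.2 : ℝ), (g.1 : ℝ)) with hddef
    have hevd : ev h d = 1 := by
      simp only [ev, hddef]
      linear_combination hdetR
    have hdne : d ≠ 0 := by
      intro h0
      rw [h0] at hevd
      simp [ev] at hevd
    have hnormd : (0 : ℝ) < ‖d‖ := norm_pos_iff.mpr hdne
    set s : ℝ := δ / (2 * ‖d‖) with hsdef
    have hspos : 0 < s := by positivity
    have hq : u + s • d ∈ convexHull ℝ S := by
      apply hball
      rw [Metric.mem_ball, dist_eq_norm, add_sub_cancel_left, norm_smul,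
        Real.norm_eq_abs, abs_of_pos hspos]
      have hsd : s * ‖d‖ = δ / 2 := by
        rw [hsdef]; field_simp
      rw [hsd]; linarith
    have hevq : ev h (u + s • d) = (t1 : ℝ) + s := by
      rw [(ev_lin h).map_add, (ev_lin h).map_smul, ht1, hevd, smul_eq_mul, mul_one]
    have := ubG _ hq
    rw [hevq, ← hvev, hMz] at this
    have : (t1 : ℝ) < (Mz : ℝ) := by linarith
    exact_mod_cast this
  -- suffices : Mz = t1 + 1
  rw [hmaxΓ, hmaxΓ1]
  have : Mz = t1 + 1 := by
    by_contra hne2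
    have hMz2 : t1 + 2 ≤ Mz := by omega
    set K : ℤ := Mz - t1 with hKdef
    have hK2 : 2 ≤ K := by omega
    have hKR : (0 : ℝ) < (K : ℝ) := by exact_mod_cast (by omega : (0:ℤ) < K)
    -- ε-values
    obtain ⟨U, hU⟩ := ev_lat g u huP.2
    obtain ⟨V, hV⟩ := ev_lat g v (hlat v hvS)
    obtain ⟨A, hA⟩ := ev_lat g p hpP.2
    have hvΓ : v ∈ convexHull ℝ S := subset_convexHull ℝ S hvS
    -- no integer strictly "between" two interior points at a high lattice height
    have hseg : ∀ w w' : ℝ × ℝ, w ∈ interior (convexHull ℝ S) →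
        w' ∈ interior (convexHull ℝ S) → ∀ C : ℤ, ev h w = (C : ℝ) → ev h w' = (C : ℝ) →
        t1 + 1 ≤ C → ∀ nn : ℤ, ¬ (ev g w ≤ (nn : ℝ) ∧ (nn : ℝ) ≤ ev g w') := by
      intro w w' hw hw' C hCw hCw' hC nn ⟨hn1, hn2⟩
      have hlatpt : ∃ z₀ : ℝ × ℝ, z₀ ∈ interior (convexHull ℝ S) ∧
          ev g z₀ = (nn : ℝ) ∧ ev h z₀ = (C : ℝ) := by
        rcases eq_or_lt_of_le (le_trans hn1 hn2) with heq | hlt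
        · refine ⟨w, hw, ?_, hCw⟩
          have : ev g w = ev g w' := heq
          linarith
        · set θ : ℝ := ((nn : ℝ) - ev g w) / (ev g w' - ev g w) with hθdef
          have hD : (0:ℝ) < ev g w' - ev g w := by linarith
          have hθ0 : 0 ≤ θ := by
            apply div_nonneg _ hD.le
            linarith
          have hθ1 : θ ≤ 1 := by
            rw [div_le_one hD]
            linarith
          refine ⟨(1 - θ) • w + θ • w', ?_, ?_, ?_⟩
          · exact cvxInt hw hw' (by linarith) hθ0 (by ring)
          · rw [(ev_lin g).map_add, (ev_lin g).map_smul, (ev_lin g).map_smul,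
              smul_eq_mul, smul_eq_mul, hθdef]
            field_simp
            ring
          · rw [(ev_lin h).map_add, (ev_lin h).map_smul, (ev_lin h).map_smul,
              smul_eq_mul, smul_eq_mul, hCw, hCw']
            ring
      obtain ⟨z₀, hz₀i, hz₀g, hz₀h⟩ := hlatpt
      have hlatz : IsLat z₀ := hlatco z₀ nn C hz₀g hz₀h
      have := hP1h z₀ hz₀i hlatz
      rw [hz₀h] at this
      have : C ≤ t1 := by exact_mod_cast this
      omega
    -- the window lemma
    have hwindow : ∀ j : ℤ, 1 ≤ j → j ≤ K - 1 →
        ∃ n : ℤ, (∀ w : ℝ × ℝ, w ∈ interior (convexHull ℝ S) →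
          ev h w = ((t1 + j : ℤ) : ℝ) → (n : ℝ) < ev g w ∧ ev g w < (n : ℝ) + 1) ∧
          K * n < (K - j) * U + j * V ∧ (K - j) * U + j * V < K * n + K := by
      intro j hj1 hj2
      have hjR1 : (1 : ℝ) ≤ (j : ℝ) := by exact_mod_cast hj1
      have hjRK : (j : ℝ) ≤ (K : ℝ) - 1 := by exact_mod_cast (by omega : j ≤ K - 1)
      set lam : ℝ := (j : ℝ) / (K : ℝ) with hlamdef
      have hlam0 : 0 < lam := by positivity
      have hlam1 : lam < 1 := by
        rw [hlamdef, div_lt_one hKR]; linarith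
      set cu : ℝ × ℝ := (1 - lam) • u + lam • v with hcudef
      have hcu_int : cu ∈ interior (convexHull ℝ S) :=
        cvxΓ.combo_interior_closure_mem_interior huP.1 (subset_closure hvΓ)
          (by linarith) hlam0.le (by ring)
      have hηcu : ev h cu = ((t1 + j : ℤ) : ℝ) := by
        rw [hcudef, (ev_lin h).map_add, (ev_lin h).map_smul, (ev_lin h).map_smul,
          smul_eq_mul, smul_eq_mul, ht1, hMz, hlamdef]
        have : (Mz : ℝ) = (t1 : ℝ) + (K : ℝ) := by
          rw [hKdef]; push_cast; ring
        rw [this]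
        push_cast
        field_simp
        ring
      have hεcu : ev g cu = (1 - lam) * (U : ℝ) + lam * (V : ℝ) := by
        rw [hcudef, (ev_lin g).map_add, (ev_lin g).map_smul, (ev_lin g).map_smul,
          smul_eq_mul, smul_eq_mul, hU, hV]
      have hnint : ∀ nn : ℤ, ev g cu ≠ (nn : ℝ) := by
        intro nn hnn
        have hlatcu : IsLat cu := hlatco cu nn (t1 + j) hnn hηcu
        have := hP1h cu hcu_int hlatcu
        rw [hηcu] at this
        have : t1 + j ≤ t1 := by exact_mod_cast this
        omega
      set n : ℤ := ⌊ev g cu⌋ with hndef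
      have hf1 : (n : ℝ) < ev g cu := lt_of_le_of_ne (Int.floor_le _) (Ne.symm (hnint n))
      have hf2 : ev g cu < (n : ℝ) + 1 := by
        have := Int.lt_floor_add_one (ev g cu)
        push_cast at this ⊢
        exact this
      refine ⟨n, ?_, ?_, ?_⟩
      · intro w hwi hwη
        constructor
        · by_contra hle
          push_neg at hle
          exact hseg w cu hwi hcu_int (t1 + j) hwη hηcu (by omega) n ⟨hle, hf1.le⟩
        · by_contra hge
          push_neg at hge
          refine hseg cu w hcu_int hwi (t1 + j) hηcu hwη (by omega) (n + 1) ⟨?_, ?_⟩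
          · push_cast; exact hf2.le
          · push_cast; exact hge
      · have h2 : (K : ℝ) * ((1 - lam) * (U : ℝ) + lam * (V : ℝ))
            = ((K : ℝ) - j) * U + j * V := by
          rw [hlamdef]; field_simp; try ring
        have hf1' : (n : ℝ) < (1 - lam) * (U : ℝ) + lam * (V : ℝ) := by
          rw [← hεcu]; exact hf1
        have h3 := mul_lt_mul_of_pos_left hf1' hKR
        rw [h2] at h3
        exact_mod_cast h3
      · have h2 : (K : ℝ) * ((1 - lam) * (U : ℝ) + lam * (V : ℝ))
            = ((K : ℝ) - j) * U + j * V := by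
          rw [hlamdef]; field_simp; try ring
        have hf2' : (1 - lam) * (U : ℝ) + lam * (V : ℝ) < (n : ℝ) + 1 := by
          rw [← hεcu]; exact hf2
        have h3 := mul_lt_mul_of_pos_left hf2' hKR
        rw [h2, mul_add, mul_one] at h3
        exact_mod_cast h3

    have hKR2 : (K : ℝ) = (Mz : ℝ) - (t1 : ℝ) := by rw [hKdef]; push_cast; ring
    have hevhp : ev h p = (t1 : ℝ) - 1 := by
      rw [htz]; have : tz = t1 - 1 := by omega
      rw [this]; push_cast; ring
    -- the per-height bounds
    have hperj : ∀ j : ℤ, 1 ≤ j → j ≤ K - 1 →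
        ∃ r e : ℤ, 0 < r ∧ r < K ∧ (K ∣ (j * (V - U) - r)) ∧ 2 ≤ e ∧ e ≤ K - 1 ∧
          K * e = (K - j) * ((A - U) * K + (V - U)) + r * (K + 1) := by
      intro j hj1 hj2
      obtain ⟨n, hwin, hl, hr⟩ := hwindow j hj1 hj2
      -- integer bounds at interior lattice points
      have hGH : ∀ z : ℝ × ℝ, z ∈ interior (convexHull ℝ S) → IsLat z →
          ∀ zg zh : ℤ, ev g z = (zg : ℝ) → ev h z = (zh : ℝ) →
          (1 ≤ (K - j) * zg + (t1 + j - zh) * V - n * (Mz - zh) ∧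
            (K - j) * zg + (t1 + j - zh) * V - n * (Mz - zh) ≤ (Mz - zh) - 1) := by
        intro z hzi hzl zg zh hzg hzh
        have hzh_le : zh ≤ t1 := by
          have := hP1h z hzi hzl; rw [hzh] at this; exact_mod_cast this
        have hzhMz : (zh : ℝ) < (Mz : ℝ) := by exact_mod_cast (by omega : zh < Mz)
        have hden : (0 : ℝ) < (Mz : ℝ) - (zh : ℝ) := by linarith
        have hnum : (0 : ℝ) < (t1 : ℝ) + (j : ℝ) - (zh : ℝ) := by
          have : zh < t1 + j := by omega
          have : (zh : ℝ) < (t1 : ℝ) + (j : ℝ) := by exact_mod_cast this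
          linarith
        set a2 : ℝ := ((t1 : ℝ) + (j : ℝ) - (zh : ℝ)) / ((Mz : ℝ) - (zh : ℝ)) with ha2def
        have ha2pos : 0 < a2 := div_pos hnum hden
        have ha2lt1 : a2 < 1 := by
          rw [ha2def, div_lt_one hden]
          have : t1 + j < Mz := by omega
          have : (t1 : ℝ) + (j : ℝ) < (Mz : ℝ) := by exact_mod_cast this
          linarith
        set w : ℝ × ℝ := (1 - a2) • z + a2 • v with hwdef
        have hw_int : w ∈ interior (convexHull ℝ S) :=
          cvxΓ.combo_interior_closure_mem_interior hzi (subset_closure hvΓ)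
            (by linarith) ha2pos.le (by ring)
        have hηw : ev h w = ((t1 + j : ℤ) : ℝ) := by
          rw [hwdef, (ev_lin h).map_add, (ev_lin h).map_smul, (ev_lin h).map_smul,
            smul_eq_mul, smul_eq_mul, hzh, hMz, ha2def]
          push_cast
          field_simp
          ring
        have hεw : ev g w = (1 - a2) * (zg : ℝ) + a2 * (V : ℝ) := by
          rw [hwdef, (ev_lin g).map_add, (ev_lin g).map_smul, (ev_lin g).map_smul,
            smul_eq_mul, smul_eq_mul, hzg, hV]
        obtain ⟨hw1, hw2⟩ := hwin w hw_int hηw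
        have hkey1 : ((Mz : ℝ) - zh) * (ev g w - n)
            = ((K : ℝ) - j) * zg + ((t1 : ℝ) + j - zh) * V - n * ((Mz : ℝ) - zh) := by
          rw [hεw, ha2def, hKR2]
          field_simp
          ring
        have hkey2 : ((Mz : ℝ) - zh) * ((n : ℝ) + 1 - ev g w)
            = ((Mz : ℝ) - zh) - (((K : ℝ) - j) * zg + ((t1 : ℝ) + j - zh) * V
              - n * ((Mz : ℝ) - zh)) := by
          rw [← hkey1]; ring
        have hpos1 : (0 : ℝ) < ((K : ℝ) - j) * zg + ((t1 : ℝ) + j - zh) * V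
            - n * ((Mz : ℝ) - zh) := by
          rw [← hkey1]; exact mul_pos hden (by linarith)
        have hpos2 : (0 : ℝ) < ((Mz : ℝ) - zh) - (((K : ℝ) - j) * zg
            + ((t1 : ℝ) + j - zh) * V - n * ((Mz : ℝ) - zh)) := by
          rw [← hkey2]; exact mul_pos hden (by linarith)
        have hcast : (((K - j) * zg + (t1 + j - zh) * V - n * (Mz - zh) : ℤ) : ℝ)
            = ((K : ℝ) - j) * zg + ((t1 : ℝ) + j - zh) * V - n * ((Mz : ℝ) - zh) := by
          push_cast; ring
        constructor
        · have : (0 : ℤ) < (K - j) * zg + (t1 + j - zh) * V - n * (Mz - zh) := by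
            have := hpos1; rw [← hcast] at this; exact_mod_cast this
          omega
        · have : (0 : ℤ) < (Mz - zh) - ((K - j) * zg + (t1 + j - zh) * V - n * (Mz - zh)) := by
            have h5 : ((((Mz - zh) - ((K - j) * zg + (t1 + j - zh) * V - n * (Mz - zh))) : ℤ) : ℝ)
                = ((Mz : ℝ) - zh) - (((K : ℝ) - j) * zg + ((t1 : ℝ) + j - zh) * V
                  - n * ((Mz : ℝ) - zh)) := by push_cast; ring
            have := hpos2; rw [← h5] at this; exact_mod_cast this
          omega
      -- r and the divisibility
      refine ⟨j * (V - U) - K * (n - U), (K - j) * A + (j + 1) * V - n * (K + 1),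
        by linarith, by linarith, ⟨n - U, by ring⟩, ?_, ?_, by ring⟩
      -- halfspace functionals
      · -- 2 ≤ e
        set w0 : ℤ × ℤ := ((K - j) * g.1 + (n - V) * h.1, (K - j) * g.2 + (n - V) * h.2)
          with hw0def
        have hw0ev : ∀ z : ℝ × ℝ, ev w0 z
            = ((K : ℝ) - j) * ev g z + ((n : ℝ) - V) * ev h z := by
          intro z; simp only [ev, hw0def]; push_cast; ring
        have hGrhull : ∀ z ∈ convexHull ℝ {q : ℝ × ℝ | q ∈ interior (convexHull ℝ S) ∧ IsLat q},
            1 - (((t1 : ℝ) + j) * V - (n : ℝ) * Mz) ≤ ev w0 z := by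
          apply convexHull_min ?_ (convex_halfSpace_ge (ev_lin w0) _)
          intro q hq
          obtain ⟨qg, hqg⟩ := ev_lat g q hq.2
          obtain ⟨qh, hqh⟩ := ev_lat h q hq.2
          have hb := (hGH q hq.1 hq.2 qg qh hqg hqh).1
          have hble : (1 : ℝ) ≤ ((K : ℝ) - j) * qg + ((t1 : ℝ) + j - qh) * V
              - n * ((Mz : ℝ) - qh) := by
            have : ((1 : ℤ) : ℝ) ≤ (((K - j) * qg + (t1 + j - qh) * V - n * (Mz - qh) : ℤ) : ℝ) := by
              exact_mod_cast hb
            push_cast at this; linarith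
          have hrel : ((K : ℝ) - j) * qg + ((t1 : ℝ) + j - qh) * V - n * ((Mz : ℝ) - qh)
              = ev w0 q + (((t1 : ℝ) + j) * V - (n : ℝ) * Mz) := by
            rw [hw0ev q, hqg, hqh]; ring
          rw [hrel] at hble
          simp only [Set.mem_setOf_eq]
          linarith
        have hdet0 : w0.1 * h.2 - w0.2 * h.1 ≠ 0 := by
          have : w0.1 * h.2 - w0.2 * h.1 = (K - j) * (g.1 * h.2 - g.2 * h.1) := by
            simp only [hw0def]; ring
          rw [this, hdet, mul_one]; omega
        have hw0ne : ¬(w0.1 = 0 ∧ w0.2 = 0) := by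
          rintro ⟨e1, e2⟩; rw [e1, e2] at hdet0; simp at hdet0
        have hGp := interior_strict w0 hw0ne _ p hpP.1 _ hGrhull
        -- convert : ev w0 p + C0 = e
        have hcaste : (((K - j) * A + (j + 1) * V - n * (K + 1) : ℤ) : ℝ)
            = ev w0 p + (((t1 : ℝ) + j) * V - (n : ℝ) * Mz) := by
          rw [hw0ev p, hA, hevhp]
          push_cast
          rw [hKR2]
          ring
        have : (1 : ℝ) < (((K - j) * A + (j + 1) * V - n * (K + 1) : ℤ) : ℝ) := by
          rw [hcaste]; linarith
        have : (1 : ℤ) < (K - j) * A + (j + 1) * V - n * (K + 1) := by exact_mod_cast this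
        omega
      · -- e ≤ K - 1
        set w1 : ℤ × ℤ := (-(K - j) * g.1 + (V - n - 1) * h.1,
          -(K - j) * g.2 + (V - n - 1) * h.2) with hw1def
        have hw1ev : ∀ z : ℝ × ℝ, ev w1 z
            = -((K : ℝ) - j) * ev g z + ((V : ℝ) - n - 1) * ev h z := by
          intro z; simp only [ev, hw1def]; push_cast; ring
        have hHrhull : ∀ z ∈ convexHull ℝ {q : ℝ × ℝ | q ∈ interior (convexHull ℝ S) ∧ IsLat q},
            1 - (((n : ℝ) + 1) * Mz - ((t1 : ℝ) + j) * V) ≤ ev w1 z := by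
          apply convexHull_min ?_ (convex_halfSpace_ge (ev_lin w1) _)
          intro q hq
          obtain ⟨qg, hqg⟩ := ev_lat g q hq.2
          obtain ⟨qh, hqh⟩ := ev_lat h q hq.2
          have hb := (hGH q hq.1 hq.2 qg qh hqg hqh).2
          have hble : ((K : ℝ) - j) * qg + ((t1 : ℝ) + j - qh) * V - n * ((Mz : ℝ) - qh)
              ≤ ((Mz : ℝ) - qh) - 1 := by
            have hc : (((K - j) * qg + (t1 + j - qh) * V - n * (Mz - qh) : ℤ) : ℝ)
                ≤ (((Mz - qh) - 1 : ℤ) : ℝ) := by exact_mod_cast hb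
            push_cast at hc; linarith
          have hrel : ((Mz : ℝ) - qh) - 1 - (((K : ℝ) - j) * qg + ((t1 : ℝ) + j - qh) * V
              - n * ((Mz : ℝ) - qh)) = ev w1 q + (((n : ℝ) + 1) * Mz - ((t1 : ℝ) + j) * V) - 1 := by
            rw [hw1ev q, hqg, hqh]; ring
          simp only [Set.mem_setOf_eq]
          nlinarith [hble, hrel]
        have hdet1 : w1.1 * h.2 - w1.2 * h.1 ≠ 0 := by
          have : w1.1 * h.2 - w1.2 * h.1 = -(K - j) * (g.1 * h.2 - g.2 * h.1) := by
            simp only [hw1def]; ring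
          rw [this, hdet, mul_one]; omega
        have hw1ne : ¬(w1.1 = 0 ∧ w1.2 = 0) := by
          rintro ⟨e1, e2⟩; rw [e1, e2] at hdet1; simp at hdet1
        have hHp := interior_strict w1 hw1ne _ p hpP.1 _ hHrhull
        have hcaste : (((K + 1) - ((K - j) * A + (j + 1) * V - n * (K + 1)) : ℤ) : ℝ)
            = ev w1 p + (((n : ℝ) + 1) * Mz - ((t1 : ℝ) + j) * V) := by
          rw [hw1ev p, hA, hevhp]
          push_cast
          rw [hKR2]
          ring
        have h6 : (1 : ℝ) < (((K + 1) - ((K - j) * A + (j + 1) * V - n * (K + 1)) : ℤ) : ℝ) := by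
          rw [hcaste]; linarith
        have : (1 : ℤ) < (K + 1) - ((K - j) * A + (j + 1) * V - n * (K + 1)) := by
          exact_mod_cast h6
        omega
    -- coprimality of V-U and K
    have hdvd_imp : ∀ j : ℤ, 1 ≤ j → j ≤ K - 1 → ¬ (K ∣ j * (V - U)) := by
      intro j hj1 hj2 hdvd
      obtain ⟨r, e, hr0, hrK, hdr, _, _, _⟩ := hperj j hj1 hj2
      have hKr : K ∣ r := by
        have := dvd_sub hdvd hdr
        simpa using this
      have := Int.le_of_dvd hr0 hKr
      omega
    have hcop : Int.gcd (V - U) K = 1 := by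
      by_contra hnc
      have hdg0 : Int.gcd (V - U) K ≠ 0 := by
        intro h0
        have := (Int.gcd_eq_zero_iff.mp h0).2
        omega
      have hdg2 : 2 ≤ (Int.gcd (V - U) K : ℤ) := by
        have h1 : Int.gcd (V - U) K ≠ 1 := hnc
        omega
      obtain ⟨j, hj⟩ := (Int.gcd_dvd_right (V - U) K : (Int.gcd (V - U) K : ℤ) ∣ K)
      obtain ⟨b', hb'⟩ := (Int.gcd_dvd_left (V - U) K : (Int.gcd (V - U) K : ℤ) ∣ (V - U))
      have hj1 : 1 ≤ j := by
        by_contra hj0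
        push_neg at hj0
        have : (Int.gcd (V - U) K : ℤ) * j ≤ 0 :=
          mul_nonpos_iff.mpr (Or.inl ⟨by omega, by omega⟩)
        omega
      have hjK : j ≤ K - 1 := by
        have h2 : 2 * j ≤ (Int.gcd (V - U) K : ℤ) * j :=
          mul_le_mul_of_nonneg_right hdg2 (by omega)
        omega
      exact hdvd_imp j hj1 hjK ⟨b', by linear_combination j * hb' - b' * hj⟩
    obtain ⟨x, y, hxy⟩ := Int.isCoprime_iff_gcd_eq_one.mpr hcop
    set i0 : ℤ := x % K with hi0def
    have hi0lo : 0 ≤ i0 := Int.emod_nonneg x (by omega)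
    have hi0hi : i0 < K := Int.emod_lt_of_pos x (by omega)
    have hdvdix : K ∣ (i0 * (V - U) - 1) := by
      refine ⟨-y - (x / K) * (V - U), ?_⟩
      rw [hi0def, Int.emod_def]
      linear_combination hxy
    have hi0ne : i0 ≠ 0 := by
      intro h0
      rw [h0] at hdvdix
      have : K ∣ (1 : ℤ) := by
        have := (dvd_neg).mpr hdvdix
        simpa using this
      have := Int.le_of_dvd one_pos this
      omega
    obtain ⟨r2, e2, hr20, hr2K, hdr2, he22, he2K2, hid2⟩ := hperj i0 (by omega) (by omega)
    have hr21 : r2 = 1 := by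
      have hd : K ∣ (r2 - 1) := by
        have h5 := dvd_sub hdvdix hdr2
        have h6 : i0 * (V - U) - 1 - (i0 * (V - U) - r2) = r2 - 1 := by ring
        rwa [h6] at h5
      rcases eq_or_lt_of_le (by omega : (0 : ℤ) ≤ r2 - 1) with he | hlt'
      · omega
      · have := Int.le_of_dvd hlt' hd
        omega
    obtain ⟨r1, e1, hr10, hr1K, hdr1, he12, he1K2, hid1⟩ := hperj (K - i0) (by omega) (by omega)
    have hr1K1 : r1 = K - 1 := by
      have h3 : K ∣ K * (V - U) - (r1 + 1) := by
        have h7 : (K - i0) * (V - U) - r1 + (i0 * (V - U) - 1) = K * (V - U) - (r1 + 1) := by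
          ring
        rw [← h7]
        exact dvd_add hdr1 hdvdix
      have hd : K ∣ (r1 + 1) := by
        have h8 := dvd_sub (dvd_mul_right K (V - U)) h3
        simpa using h8
      have := Int.le_of_dvd (by omega) hd
      omega
    rw [hr21] at hid2
    rw [hr1K1] at hid1
    -- final contradiction
    have hc1 : 1 ≤ (A - U) * K + (V - U) := by
      by_contra hc
      push_neg at hc
      have h1 : (K - i0) * ((A - U) * K + (V - U)) ≤ 0 :=
        mul_nonpos_iff.mpr (Or.inl ⟨by omega, by omega⟩)
      have h2 : K * 2 ≤ K * e2 := mul_le_mul_of_nonneg_left he22 (by omega)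
      linarith [hid2, h1, h2, hK2]
    have h1 : i0 * 1 ≤ i0 * ((A - U) * K + (V - U)) :=
      mul_le_mul_of_nonneg_left hc1 (by omega)
    have h2 : K * e1 ≤ K * (K - 1) := mul_le_mul_of_nonneg_left he1K2 (by omega)
    have h3 : K * (K - 1) - (K - 1) * (K + 1) = -(K - 1) := by ring
    linarith [hid1, h1, h2, h3, hK2, hi0lo, hi0ne, hi0hi]
  exact_mod_cast this

/-- if `h` is tight for the adjoint `Γ'` (with respect to `Γ''`),
then `h` is tight for `Γ`. -/
theorem stmt_3 (S : Set (ℝ × ℝ)) (hfin : S.Finite) (hne : S.Nonempty)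
    (hlat : ∀ p ∈ S, IsLat p)
    (Γ : Set (ℝ × ℝ)) (hΓ : Γ = convexHull ℝ S)
    (hint1 : {p | p ∈ interior Γ ∧ IsLat p}.Nonempty)
    (hint2 : {p | p ∈ interior (adjoint Γ) ∧ IsLat p}.Nonempty)
    (h : ℤ × ℤ) (hh : h ≠ 0)
    (ht : Tight (adjoint Γ) h) :
    Tight Γ h := by
  subst hΓ
  obtain ⟨htmax, htmin⟩ := ht
  have hP1fin : ({p | p ∈ interior (convexHull ℝ S) ∧ IsLat p}).Finite := lat_finite S hfin
  have hP2fin : ({p | p ∈ interior (convexHull ℝ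
      {p | p ∈ interior (convexHull ℝ S) ∧ IsLat p}) ∧ IsLat p}).Finite := lat_finite _ hP1fin
  have hint2' : ({p | p ∈ interior (convexHull ℝ
      {p | p ∈ interior (convexHull ℝ S) ∧ IsLat p}) ∧ IsLat p}).Nonempty := hint2
  constructor
  · exact key S hfin hne hlat hint1 hint2 h htmax
  · -- min side via -h
    have hminΓ : minW (convexHull ℝ S) h = -maxW (convexHull ℝ S) (-h.1, -h.2) :=
      minW_eq_neg S hfin hne h
    have hminΓ1 : minW (adjoint (convexHull ℝ S)) h
        = -maxW (adjoint (convexHull ℝ S)) (-h.1, -h.2) :=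
      minW_eq_neg _ hP1fin hint1 h
    have hminΓ2 : minW (adjoint (adjoint (convexHull ℝ S))) h
        = -maxW (adjoint (adjoint (convexHull ℝ S))) (-h.1, -h.2) :=
      minW_eq_neg _ hP2fin hint2' h
    have hmaxneg : maxW (adjoint (convexHull ℝ S)) (-h.1, -h.2)
        = maxW (adjoint (adjoint (convexHull ℝ S))) (-h.1, -h.2) + 1 := by
      rw [hminΓ1, hminΓ2] at htmin
      linarith
    have hkey := key S hfin hne hlat hint1 hint2 (-h.1, -h.2) hmaxneg
    rw [hminΓ, hminΓ1]
    linarith
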